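/- Let u, v be two weight sequences, and suppose the weighted backward shifts B_u, B_v on 𝕂^{ℤ₊} admit invariant product probability measures m_u = ⊗_{n≥0} μ_{u,n} and m_v = ⊗_{n≥0} μ_{v,n}, both different from the Dirac mass at 0, such that the supports of μ_{u,n} and μ_{v,n} coincide for every n ≥ 0. Let S := supp(μ_{u,0}) = supp(μ_{v,0}). If S is compact, or if 0 ∉ S, then |u₁⋯u_n| = |v₁⋯v_n| for all n ≥ 1; consequently, if u and v are positive weight sequences, then u = v. -/

import Mathlib

open MeasureTheory Filter
open scoped ENNReal

/-- The (topological) support of a Borel measure: the set of points all of whose open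
neighbourhoods have positive measure. -/
def measSupport {α : Type*} [TopologicalSpace α] [MeasurableSpace α]
    (μ : Measure α) : Set α :=
  {x | ∀ U : Set α, IsOpen U → x ∈ U → 0 < μ U}

/-- `μ` is the product measure on `𝕂^{ℤ₊}` with marginals `μn`. -/
def IsProductMeasure {𝕂 : Type*} [MeasurableSpace 𝕂]
    (μ : Measure (ℕ → 𝕂)) (μn : ℕ → Measure 𝕂) : Prop :=
  ∀ (N : ℕ) (A : ℕ → Set 𝕂), (∀ n, MeasurableSet (A n)) →
    μ {t | ∀ n ≤ N, t n ∈ A n} = ∏ n ∈ Finset.range (N + 1), μn n (A n)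

section Aux

variable {𝕂 : Type*} [RCLike 𝕂] [MeasurableSpace 𝕂] [BorelSpace 𝕂]

lemma measSupport_isClosed {μ : Measure 𝕂} : IsClosed (measSupport μ) := by
  rw [← isOpen_compl_iff, isOpen_iff_forall_mem_open]
  intro x hx
  simp only [measSupport, Set.mem_compl_iff, Set.mem_setOf_eq, not_forall] at hx
  obtain ⟨U, hU, hxU, hμ⟩ := hx
  exact ⟨U, fun y hy hyS => hμ (hyS U hU hy), hU, hxU⟩

lemma measure_compl_measSupport (μ : Measure 𝕂) : μ (measSupport μ)ᶜ = 0 := by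
  obtain ⟨b, hbc, -, hbasis⟩ := TopologicalSpace.exists_countable_basis 𝕂
  refine measure_mono_null (fun x hx => ?_)
    ((measure_sUnion_null_iff (hbc.mono (Set.sep_subset _ _))).2 fun B hB => hB.2)
  simp only [measSupport, Set.mem_compl_iff, Set.mem_setOf_eq, not_forall] at hx
  obtain ⟨U, hU, hxU, hμ⟩ := hx
  obtain ⟨B, hBb, hxB, hBU⟩ := hbasis.exists_subset_of_mem_open hxU hU
  exact ⟨B, ⟨hBb, le_antisymm (not_lt.1 fun h => hμ (h.trans_le (measure_mono hBU)))
    zero_le⟩, hxB⟩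

/-- measurability of cylinder sets -/
lemma cyl_measurable (A : ℕ → Set 𝕂) (hA : ∀ n, MeasurableSet (A n)) (N : ℕ) :
    MeasurableSet {t : ℕ → 𝕂 | ∀ k ≤ N, t k ∈ A k} := by
  have : {t : ℕ → 𝕂 | ∀ k ≤ N, t k ∈ A k} = ⋂ k ∈ Set.Iic N, (fun t : ℕ → 𝕂 => t k) ⁻¹' A k := by
    ext t; simp [Set.mem_iInter]
  rw [this]
  exact MeasurableSet.biInter (Set.to_countable _) fun k _ => (measurable_pi_apply k) (hA k)

lemma marg_step {w : ℕ → 𝕂} {μn : ℕ → Measure 𝕂} (hμn : ∀ n, IsProbabilityMeasure (μn n))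
    {m : Measure (ℕ → 𝕂)} (hprod : IsProductMeasure m μn)
    (hinv : ∀ B : Set (ℕ → 𝕂), MeasurableSet B →
        m ((fun t (n : ℕ) => w (n + 1) * t (n + 1)) ⁻¹' B) = m B)
    (n : ℕ) {A : Set 𝕂} (hA : MeasurableSet A) :
    μn (n + 1) ((fun s => w (n + 1) * s) ⁻¹' A) = μn n A := by
  set Ac : ℕ → Set 𝕂 := fun k => if k = n then A else Set.univ with hAcdef
  set Ac' : ℕ → Set 𝕂 := fun k => if k = n + 1 then (fun s => w (n + 1) * s) ⁻¹' A
    else Set.univ with hAc'def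
  have hAm : ∀ k, MeasurableSet (Ac k) := by
    intro k; by_cases h : k = n <;> simp [hAcdef, h, hA]
  have hAm' : ∀ k, MeasurableSet (Ac' k) := by
    intro k
    by_cases h : k = n + 1
    · simp only [hAc'def, if_pos h]
      exact (continuous_mul_left _).measurable hA
    · simp [hAc'def, h]
  have hpre : (fun t (k : ℕ) => w (k + 1) * t (k + 1)) ⁻¹' {t : ℕ → 𝕂 | ∀ k ≤ n, t k ∈ Ac k}
      = {t : ℕ → 𝕂 | ∀ k ≤ n + 1, t k ∈ Ac' k} := by
    ext t
    simp only [Set.mem_preimage, Set.mem_setOf_eq]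
    constructor
    · intro h k hk
      by_cases hkn : k = n + 1
      · subst hkn
        have := h n le_rfl
        simp only [hAcdef, if_pos rfl] at this
        simpa [hAc'def] using this
      · simp [hAc'def, hkn]
    · intro h k hk
      by_cases hkn : k = n
      · have := h (n + 1) le_rfl
        simp only [hAc'def, if_pos rfl, Set.mem_preimage] at this
        rw [hkn]
        simpa [hAcdef] using this
      · simp [hAcdef, hkn]
  have e2 := hprod n Ac hAm
  have e1 := hprod (n + 1) Ac' hAm'
  have hμ1 : ∀ k, μn k Set.univ = 1 := fun k => (hμn k).measure_univ
  have p2 : ∏ k ∈ Finset.range (n + 1), μn k (Ac k) = μn n A := by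
    rw [Finset.prod_eq_single_of_mem n (Finset.mem_range.2 (Nat.lt_succ_self n))]
    · simp [hAcdef]
    · intro b _ hb; simp [hAcdef, hb, hμ1]
  have p1 : ∏ k ∈ Finset.range (n + 2), μn k (Ac' k)
      = μn (n + 1) ((fun s => w (n + 1) * s) ⁻¹' A) := by
    rw [Finset.prod_eq_single_of_mem (n + 1) (Finset.mem_range.2 (Nat.lt_succ_self (n + 1)))]
    · simp [hAc'def]
    · intro b _ hb; simp [hAc'def, hb, hμ1]
  have hinvB := hinv _ (cyl_measurable Ac hAm n)
  rw [hpre] at hinvB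
  rw [← p1, ← e1, hinvB, e2, p2]

lemma marg {w : ℕ → 𝕂} {μn : ℕ → Measure 𝕂} (hμn : ∀ n, IsProbabilityMeasure (μn n))
    {m : Measure (ℕ → 𝕂)} (hprod : IsProductMeasure m μn)
    (hinv : ∀ B : Set (ℕ → 𝕂), MeasurableSet B →
        m ((fun t (n : ℕ) => w (n + 1) * t (n + 1)) ⁻¹' B) = m B) :
    ∀ (n : ℕ) {A : Set 𝕂}, MeasurableSet A →
      μn n ((fun s => (∏ i ∈ Finset.Icc 1 n, w i) * s) ⁻¹' A) = μn 0 A := by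
  intro n
  induction n with
  | zero =>
    intro A hA
    have h0 : Finset.Icc 1 0 = (∅ : Finset ℕ) := Finset.Icc_eq_empty (by omega)
    simp [h0]
  | succ n ih =>
    intro A hA
    have hprodIcc : ∏ i ∈ Finset.Icc 1 (n + 1), w i
        = (∏ i ∈ Finset.Icc 1 n, w i) * w (n + 1) :=
      Finset.prod_Icc_succ_top (Nat.le_add_left 1 n) w
    have hsplit : (fun s => (∏ i ∈ Finset.Icc 1 (n + 1), w i) * s) ⁻¹' A
        = (fun s => w (n + 1) * s) ⁻¹' ((fun s => (∏ i ∈ Finset.Icc 1 n, w i) * s) ⁻¹' A) := by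
      ext s
      simp only [Set.mem_preimage, hprodIcc]
      ring_nf
    rw [hsplit, marg_step hμn hprod hinv n ((continuous_mul_left _).measurable hA), ih hA]

lemma measSupport_iff_of_scaling {μ ν : Measure 𝕂} {c : 𝕂} (hc : c ≠ 0)
    (h : ∀ {A : Set 𝕂}, MeasurableSet A → ν ((fun s => c * s) ⁻¹' A) = μ A) :
    ∀ x, x ∈ measSupport ν ↔ c * x ∈ measSupport μ := by
  intro x
  constructor
  · intro hx V hV hcx
    have hpre : IsOpen ((fun s => c * s) ⁻¹' V) := hV.preimage (continuous_mul_left c)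
    have := hx _ hpre hcx
    rwa [h hV.measurableSet] at this
  · intro hx U hU hxU
    have himg : IsOpen ((fun s => c * s) '' U) := (Homeomorph.mulLeft₀ c hc).isOpenMap U hU
    have hmem : c * x ∈ (fun s => c * s) '' U := ⟨x, hxU, rfl⟩
    have hpos := hx _ himg hmem
    have hpreim : (fun s => c * s) ⁻¹' ((fun s => c * s) '' U) = U :=
      Set.preimage_image_eq U (mul_right_injective₀ hc)
    have := h himg.measurableSet
    rw [hpreim] at this
    rwa [← this] at hpos

lemma norm_eq_one_of_mul_mem {S : Set 𝕂} (hScl : IsClosed S)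
    {s₀ : 𝕂} (hs₀ : s₀ ∈ S) (hs₀0 : s₀ ≠ 0) {c : 𝕂} (hc : c ≠ 0)
    (hiff : ∀ s, s ∈ S ↔ c * s ∈ S)
    (hS : IsCompact S ∨ (0 : 𝕂) ∉ S) : ‖c‖ = 1 := by
  have hcpos : (0 : ℝ) < ‖c‖ := norm_pos_iff.2 hc
  have hinv_iff : ∀ s, s ∈ S ↔ c⁻¹ * s ∈ S := by
    intro s
    have := hiff (c⁻¹ * s)
    rw [← mul_assoc, mul_inv_cancel₀ hc, one_mul] at this
    exact this.symm
  have key : ∀ d : 𝕂, (∀ s, s ∈ S → d * s ∈ S) → ∀ n : ℕ, d ^ n * s₀ ∈ S := by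
    intro d hd n
    induction n with
    | zero => simpa using hs₀
    | succ n ih =>
      have := hd _ ih
      rwa [show d * (d ^ n * s₀) = d ^ (n + 1) * s₀ by ring] at this
  have big : ∀ d : 𝕂, 1 < ‖d‖ → (∀ s, s ∈ S → d * s ∈ S) → IsCompact S → False := by
    intro d hd hmem hcomp
    obtain ⟨R, hR⟩ := isBounded_iff_forall_norm_le.mp hcomp.isBounded
    obtain ⟨n, hn⟩ := pow_unbounded_of_one_lt (R / ‖s₀‖) hd
    have h1 := hR _ (key d hmem n)
    rw [norm_mul, norm_pow] at h1
    have hs₀pos : (0 : ℝ) < ‖s₀‖ := norm_pos_iff.2 hs₀0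
    have : R < ‖d‖ ^ n * ‖s₀‖ := (div_lt_iff₀ hs₀pos).mp hn
    linarith
  have small : ∀ d : 𝕂, ‖d‖ < 1 → (∀ s, s ∈ S → d * s ∈ S) → (0 : 𝕂) ∉ S → False := by
    intro d hd hmem h0
    have htend : Tendsto (fun n : ℕ => d ^ n * s₀) atTop (nhds 0) := by
      have := (tendsto_pow_atTop_nhds_zero_of_norm_lt_one hd).mul_const s₀
      rwa [zero_mul] at this
    exact h0 (hScl.mem_of_tendsto htend (Eventually.of_forall (key d hmem)))
  by_contra hne
  have hmemc : ∀ s, s ∈ S → c * s ∈ S := fun s hs => (hiff s).1 hs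
  have hmemci : ∀ s, s ∈ S → c⁻¹ * s ∈ S := fun s hs => (hinv_iff s).1 hs
  rcases lt_or_gt_of_ne hne with hlt | hgt
  · -- ‖c‖ < 1
    rcases hS with hcomp | h0
    · exact big c⁻¹ (by rw [norm_inv]; exact (one_lt_inv₀ hcpos).2 hlt) hmemci hcomp
    · exact small c hlt hmemc h0
  · rcases hS with hcomp | h0
    · exact big c hgt hmemc hcomp
    · exact small c⁻¹ (by rw [norm_inv]; exact inv_lt_one_of_one_lt₀ hgt) hmemci h0

end Aux

theorem eq_norms_of_same_support_product_measures
    {𝕂 : Type*} [RCLike 𝕂] [MeasurableSpace 𝕂] [BorelSpace 𝕂]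
    (u v : ℕ → 𝕂) (hu0 : ∀ n, 1 ≤ n → u n ≠ 0) (hv0 : ∀ n, 1 ≤ n → v n ≠ 0)
    (hubdd : ∃ M : ℝ, ∀ n, ‖u n‖ ≤ M) (hvbdd : ∃ M : ℝ, ∀ n, ‖v n‖ ≤ M)
    (μun μvn : ℕ → Measure 𝕂)
    (hμun : ∀ n, IsProbabilityMeasure (μun n)) (hμvn : ∀ n, IsProbabilityMeasure (μvn n))
    (mu mv : Measure (ℕ → 𝕂)) [IsProbabilityMeasure mu] [IsProbabilityMeasure mv]
    (hmu_prod : IsProductMeasure mu μun) (hmv_prod : IsProductMeasure mv μvn)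
    (hmu_inv : ∀ B : Set (ℕ → 𝕂), MeasurableSet B →
        mu ((fun t (n : ℕ) => u (n + 1) * t (n + 1)) ⁻¹' B) = mu B)
    (hmv_inv : ∀ B : Set (ℕ → 𝕂), MeasurableSet B →
        mv ((fun t (n : ℕ) => v (n + 1) * t (n + 1)) ⁻¹' B) = mv B)
    (hmu_ne : mu ≠ Measure.dirac 0) (hmv_ne : mv ≠ Measure.dirac 0)
    (hsupp : ∀ n, measSupport (μun n) = measSupport (μvn n))
    (hS : IsCompact (measSupport (μun 0)) ∨ (0 : 𝕂) ∉ measSupport (μun 0)) :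
    (∀ n : ℕ, 1 ≤ n →
        ‖∏ i ∈ Finset.Icc 1 n, u i‖ = ‖∏ i ∈ Finset.Icc 1 n, v i‖) ∧
    ((∀ n : ℕ, 1 ≤ n → u n = (‖u n‖ : 𝕂) ∧ v n = (‖v n‖ : 𝕂)) →
        ∀ n : ℕ, 1 ≤ n → u n = v n) := by
  set S : Set 𝕂 := measSupport (μun 0) with hSdef
  -- products are nonzero
  have hPu : ∀ n, (∏ i ∈ Finset.Icc 1 n, u i) ≠ 0 := fun n =>
    Finset.prod_ne_zero_iff.2 fun i hi => hu0 i (Finset.mem_Icc.1 hi).1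
  have hPv : ∀ n, (∏ i ∈ Finset.Icc 1 n, v i) ≠ 0 := fun n =>
    Finset.prod_ne_zero_iff.2 fun i hi => hv0 i (Finset.mem_Icc.1 hi).1
  have hmargu := marg hμun hmu_prod hmu_inv
  have hmargv := marg hμvn hmv_prod hmv_inv
  -- support characterizations
  have hsuppu : ∀ n x, x ∈ measSupport (μun n) ↔ (∏ i ∈ Finset.Icc 1 n, u i) * x ∈ S :=
    fun n => measSupport_iff_of_scaling (hPu n) (fun {A} hA => hmargu n hA)
  have hsuppv : ∀ n x, x ∈ measSupport (μvn n) ↔ (∏ i ∈ Finset.Icc 1 n, v i) * x ∈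
      measSupport (μvn 0) :=
    fun n => measSupport_iff_of_scaling (hPv n) (fun {A} hA => hmargv n hA)
  have hSv : measSupport (μvn 0) = S := (hsupp 0).symm
  -- nontriviality: S contains a nonzero element
  have hnontriv : ∃ s ∈ S, s ≠ 0 := by
    by_contra hcon
    push_neg at hcon
    have hSsub : S ⊆ {0} := fun s hs => hcon s hs
    have h0c : μun 0 ({0}ᶜ : Set 𝕂) = 0 :=
      measure_mono_null (Set.compl_subset_compl.mpr hSsub) (measure_compl_measSupport (μun 0))
    have hn0 : ∀ n, μun n ({0}ᶜ : Set 𝕂) = 0 := by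
      intro n
      have hm := hmargu n (measurableSet_singleton (0 : 𝕂)).compl
      have hpre : (fun s => (∏ i ∈ Finset.Icc 1 n, u i) * s) ⁻¹' ({0}ᶜ : Set 𝕂) = {0}ᶜ := by
        ext s
        simp [mul_eq_zero, hPu n]
      rw [hpre] at hm
      rw [hm, h0c]
    have hone : ∀ n, μun n ({0} : Set 𝕂) = 1 := by
      intro n
      have := (hμun n).measure_univ
      have hadd := measure_add_measure_compl (μ := μun n) (measurableSet_singleton (0 : 𝕂))
      rw [hn0 n, add_zero, this] at hadd
      exact hadd
    have hCmeas : ∀ N, MeasurableSet {t : ℕ → 𝕂 | ∀ k ≤ N, t k ∈ ({0} : Set 𝕂)} :=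
      fun N => cyl_measurable _ (fun _ => measurableSet_singleton 0) N
    have hC : ∀ N, mu {t : ℕ → 𝕂 | ∀ k ≤ N, t k ∈ ({0} : Set 𝕂)} = 1 := by
      intro N
      rw [hmu_prod N (fun _ => {0}) (fun _ => measurableSet_singleton 0)]
      simp [hone]
    have hZeq : (⋂ N, {t : ℕ → 𝕂 | ∀ k ≤ N, t k ∈ ({0} : Set 𝕂)})
        = ({0} : Set (ℕ → 𝕂)) := by
      ext t
      simp only [Set.mem_iInter, Set.mem_setOf_eq, Set.mem_singleton_iff]
      constructor
      · intro h
        funext k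
        exact h k k le_rfl
      · intro h N k _
        rw [h]; rfl
    have hZmeas : MeasurableSet ({0} : Set (ℕ → 𝕂)) := by
      rw [← hZeq]
      exact MeasurableSet.iInter hCmeas
    have hmuZ : mu ({0} : Set (ℕ → 𝕂)) = 1 := by
      rw [← hZeq]
      have hcompl : mu (⋂ N, {t : ℕ → 𝕂 | ∀ k ≤ N, t k ∈ ({0} : Set 𝕂)})ᶜ = 0 := by
        rw [Set.compl_iInter]
        refine measure_iUnion_null fun N => ?_
        rw [prob_compl_eq_zero_iff (hCmeas N)]
        exact hC N
      have := measure_add_measure_compl (μ := mu) (MeasurableSet.iInter hCmeas)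
      rw [hcompl, add_zero, measure_univ] at this
      exact this
    apply hmu_ne
    ext B hB
    rw [Measure.dirac_apply' _ hB]
    by_cases h0B : (0 : ℕ → 𝕂) ∈ B
    · rw [Set.indicator_of_mem h0B]
      refine le_antisymm prob_le_one ?_
      calc (1 : ℝ≥0∞) = mu {0} := hmuZ.symm
        _ ≤ mu B := measure_mono (Set.singleton_subset_iff.2 h0B)
    · rw [Set.indicator_of_notMem h0B]
      have hsub : B ⊆ ({0} : Set (ℕ → 𝕂))ᶜ := by
        intro t ht htz
        exact h0B ((Set.mem_singleton_iff.1 htz) ▸ ht)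
      exact measure_mono_null hsub (by rw [prob_compl_eq_zero_iff hZmeas]; exact hmuZ)
  obtain ⟨s₀, hs₀, hs₀0⟩ := hnontriv
  -- main norm equality
  have main : ∀ n : ℕ, 1 ≤ n →
      ‖∏ i ∈ Finset.Icc 1 n, u i‖ = ‖∏ i ∈ Finset.Icc 1 n, v i‖ := by
    intro n _
    have hc : (∏ i ∈ Finset.Icc 1 n, v i) * (∏ i ∈ Finset.Icc 1 n, u i)⁻¹ ≠ 0 :=
      mul_ne_zero (hPv n) (inv_ne_zero (hPu n))
    have hiff : ∀ s, s ∈ S ↔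
        ((∏ i ∈ Finset.Icc 1 n, v i) * (∏ i ∈ Finset.Icc 1 n, u i)⁻¹) * s ∈ S := by
      intro s
      have h1 := hsuppu n ((∏ i ∈ Finset.Icc 1 n, u i)⁻¹ * s)
      have h2 := hsuppv n ((∏ i ∈ Finset.Icc 1 n, u i)⁻¹ * s)
      rw [hsupp n] at h1
      rw [hSv] at h2
      have h3 := h1.symm.trans h2
      rwa [show (∏ i ∈ Finset.Icc 1 n, u i) * ((∏ i ∈ Finset.Icc 1 n, u i)⁻¹ * s) = s by
          rw [← mul_assoc, mul_inv_cancel₀ (hPu n), one_mul],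
        show (∏ i ∈ Finset.Icc 1 n, v i) * ((∏ i ∈ Finset.Icc 1 n, u i)⁻¹ * s)
            = ((∏ i ∈ Finset.Icc 1 n, v i) * (∏ i ∈ Finset.Icc 1 n, u i)⁻¹) * s by ring] at h3
    have hnorm := norm_eq_one_of_mul_mem measSupport_isClosed hs₀ hs₀0 hc hiff hS
    rw [norm_mul, norm_inv] at hnorm
    have hPune : ‖∏ i ∈ Finset.Icc 1 n, u i‖ ≠ 0 := norm_ne_zero_iff.2 (hPu n)
    rw [mul_inv_eq_one₀ hPune] at hnorm
    exact hnorm.symm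
  refine ⟨main, ?_⟩
  intro hreal
  -- real products equal for all n (including 0)
  have hQ : ∀ n : ℕ, (∏ i ∈ Finset.Icc 1 n, ‖u i‖) = ∏ i ∈ Finset.Icc 1 n, ‖v i‖ := by
    intro n
    rcases Nat.eq_zero_or_pos n with h | h
    · subst h; simp [Finset.Icc_eq_empty (show ¬(1:ℕ) ≤ 0 by norm_num)]
    · have := main n h
      rwa [norm_prod, norm_prod] at this
  intro n hn
  obtain ⟨m, rfl⟩ : ∃ m, n = m + 1 := ⟨n - 1, (Nat.succ_pred_eq_of_pos hn).symm⟩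
  have h1 := hQ m
  have h2 := hQ (m + 1)
  rw [Finset.prod_Icc_succ_top (Nat.le_add_left 1 m), Finset.prod_Icc_succ_top (Nat.le_add_left 1 m), h1] at h2
  have hne : (∏ i ∈ Finset.Icc 1 m, ‖v i‖) ≠ 0 :=
    Finset.prod_ne_zero_iff.2 fun i hi => norm_ne_zero_iff.2 (hv0 i (Finset.mem_Icc.1 hi).1)
  have heq : ‖u (m + 1)‖ = ‖v (m + 1)‖ := mul_left_cancel₀ hne h2
  obtain ⟨hu, hv⟩ := hreal (m + 1) hn
  rw [hu, hv, heq]
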